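/- Let Q be an n×n real symmetric positive semidefinite matrix of rank k, let M be the positive semidefinite square root of Q, let C be an m×n real matrix with rank C = m, let C⁺ be the Moore–Penrose pseudoinverse of C, let N = I − C⁺C, and let (MN)⁺ be the Moore–Penrose pseudoinverse of MN. Then the image of the set {x ∈ ℝⁿ | xᵀQx ≤ 1} under the linear map x ↦ Cx equals {y ∈ ℝᵐ | yᵀRy ≤ 1}, where R = C⁺ᵀ M (I − (MN)(MN)⁺) M C⁺. -/

import Mathlib

open Matrix

/-- `Ap` is the Moore–Penrose pseudoinverse of `A`. -/
def IsMoorePenrose {m n : ℕ} (A : Matrix (Fin m) (Fin n) ℝ)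
    (Ap : Matrix (Fin n) (Fin m) ℝ) : Prop :=
  A * Ap * A = A ∧ Ap * A * Ap = Ap ∧ (A * Ap)ᵀ = A * Ap ∧ (Ap * A)ᵀ = Ap * A

private lemma dot_self_nonneg {n : ℕ} (w : Fin n → ℝ) : 0 ≤ w ⬝ᵥ w :=
  Finset.sum_nonneg fun _ _ => mul_self_nonneg _

private lemma dot_sq {n m : ℕ} (A : Matrix (Fin m) (Fin n) ℝ) (y : Fin n → ℝ) :
    y ⬝ᵥ (Aᵀ * A).mulVec y = (A.mulVec y) ⬝ᵥ (A.mulVec y) := by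
  rw [← Matrix.mulVec_mulVec, Matrix.dotProduct_mulVec, Matrix.vecMul_transpose]

/-- The image of a (k,n)-cylinder under a surjective linear map y = Cx is the cylinder
determined by R = C⁺ᵀ M (I − (MN)(MN)⁺) M C⁺, where M = Q^{1/2} and N = I − C⁺C. -/
theorem image_cylinder (n m k : ℕ)
    (Q M : Matrix (Fin n) (Fin n) ℝ) (hQ : Q.PosSemidef) (hrankQ : Q.rank = k)
    (hM : M.PosSemidef) (hMsq : M * M = Q)
    (C : Matrix (Fin m) (Fin n) ℝ) (hrankC : C.rank = m)
    (Cp : Matrix (Fin n) (Fin m) ℝ) (hCp : IsMoorePenrose C Cp)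
    (N : Matrix (Fin n) (Fin n) ℝ) (hN : N = 1 - Cp * C)
    (MNp : Matrix (Fin n) (Fin n) ℝ) (hMNp : IsMoorePenrose (M * N) MNp) :
    C.mulVec '' {x : Fin n → ℝ | x ⬝ᵥ Q.mulVec x ≤ 1} =
      {y : Fin m → ℝ |
        y ⬝ᵥ (Cpᵀ * M * (1 - M * N * MNp) * M * Cp).mulVec y ≤ 1} := by
  obtain ⟨hC1, hC2, hC3, hC4⟩ := hCp
  obtain ⟨hA1, hA2, hA3, hA4⟩ := hMNp
  have hMt : Mᵀ = M := hM.1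
  set S : Matrix (Fin n) (Fin n) ℝ := 1 - M * N * MNp with hSdef
  -- basic identities
  have hsurj : Function.Surjective C.mulVec := by
    have h1 : LinearMap.range C.mulVecLin = ⊤ := by
      apply Submodule.eq_top_of_finrank_eq
      rw [show Module.finrank ℝ (Fin m → ℝ) = m by simp]
      exact hrankC
    intro y
    obtain ⟨x, hx⟩ := LinearMap.range_eq_top.mp h1 y
    exact ⟨x, hx⟩
  have hCCp : C * Cp = 1 := by
    have key : ∀ y, (C * Cp).mulVec y = y := by
      intro y
      obtain ⟨x, rfl⟩ := hsurj y
      rw [Matrix.mulVec_mulVec, hC1]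
    ext i j
    have h2 := congrFun (key (Pi.single j 1)) i
    rw [Matrix.mulVec_single_one] at h2
    simp only [Matrix.col_apply] at h2
    rw [h2, Matrix.one_apply, Pi.single_apply]
  have hCN : C * N = 0 := by
    rw [hN, Matrix.mul_sub, Matrix.mul_one, ← Matrix.mul_assoc, hC1, sub_self]
  have hCpC : Cp * C = 1 - N := by rw [hN, sub_sub_cancel]
  have hPP : (M * N * MNp) * (M * N * MNp) = M * N * MNp := by
    rw [← Matrix.mul_assoc, hA1]
  have hPt : (M * N * MNp)ᵀ = M * N * MNp := hA3
  have hSt : Sᵀ = S := by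
    rw [hSdef, Matrix.transpose_sub, Matrix.transpose_one, hPt]
  have hSS : S * S = S := by
    rw [hSdef, Matrix.sub_mul, Matrix.mul_sub, Matrix.mul_sub, Matrix.one_mul,
      Matrix.mul_one, Matrix.one_mul, hPP]
    abel
  have hSMN : S * (M * N) = 0 := by
    rw [hSdef, Matrix.sub_mul, Matrix.one_mul, hA1, sub_self]
  have hkey1 : S * M * Cp * C = S * M := by
    rw [Matrix.mul_assoc (S * M) Cp C, hCpC, Matrix.mul_sub, Matrix.mul_one,
      Matrix.mul_assoc S M N, hSMN, sub_zero]
  have hR : Cpᵀ * M * S * M * Cp = (S * M * Cp)ᵀ * (S * M * Cp) := by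
    rw [Matrix.transpose_mul, Matrix.transpose_mul, hSt, hMt]
    have h3 : S * (S * (M * Cp)) = S * (M * Cp) := by
      rw [← Matrix.mul_assoc S S, hSS]
    simp only [Matrix.mul_assoc]
    rw [h3]
  -- x ⬝ Q x = |Mx|²
  have hQform : ∀ x : Fin n → ℝ, x ⬝ᵥ Q.mulVec x = (M.mulVec x) ⬝ᵥ (M.mulVec x) := by
    intro x
    rw [← hMsq, show M * M = Mᵀ * M from by rw [hMt]]
    exact dot_sq M x
  -- the quadratic form of R
  have hRform : ∀ y : Fin m → ℝ,
      y ⬝ᵥ (Cpᵀ * M * S * M * Cp).mulVec y =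
        ((S * M * Cp).mulVec y) ⬝ᵥ ((S * M * Cp).mulVec y) := by
    intro y
    rw [hR]
    exact dot_sq _ y
  ext y
  simp only [Set.mem_image, Set.mem_setOf_eq]
  constructor
  · rintro ⟨x, hx, rfl⟩
    set v := M.mulVec x with hv
    have hBv : (S * M * Cp).mulVec (C.mulVec x) = S.mulVec v := by
      rw [Matrix.mulVec_mulVec, hkey1, ← Matrix.mulVec_mulVec]
    have h4 : (S.mulVec v) ⬝ᵥ (S.mulVec v) = v ⬝ᵥ S.mulVec v := by
      have := dot_sq S v
      rw [hSt, hSS] at this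
      exact this.symm
    have h5 : 0 ≤ v ⬝ᵥ (M * N * MNp).mulVec v := by
      have := dot_sq (M * N * MNp) v
      rw [hPt, hPP] at this
      rw [this]
      exact dot_self_nonneg _
    have hsplit : v ⬝ᵥ (M * N * MNp).mulVec v + v ⬝ᵥ S.mulVec v = v ⬝ᵥ v := by
      rw [← dotProduct_add, ← Matrix.add_mulVec, hSdef, add_sub_cancel,
        Matrix.one_mulVec]
    calc (C.mulVec x) ⬝ᵥ (Cpᵀ * M * S * M * Cp).mulVec (C.mulVec x)
        = v ⬝ᵥ S.mulVec v := by rw [hRform, hBv, h4]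
      _ ≤ v ⬝ᵥ v := by linarith
      _ = x ⬝ᵥ Q.mulVec x := (hQform x).symm
      _ ≤ 1 := hx
  · intro hy
    have hCX : C * (Cp - N * (MNp * (M * Cp))) = 1 := by
      rw [Matrix.mul_sub, hCCp, ← Matrix.mul_assoc, hCN, Matrix.zero_mul, sub_zero]
    have hMX : M * (Cp - N * (MNp * (M * Cp))) = S * (M * Cp) := by
      rw [Matrix.mul_sub, hSdef, Matrix.sub_mul, Matrix.one_mul]
      congr 1
      simp only [Matrix.mul_assoc]
    refine ⟨(Cp - N * (MNp * (M * Cp))).mulVec y, ?_, ?_⟩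
    · rw [hQform, Matrix.mulVec_mulVec, hMX, ← Matrix.mul_assoc,
        ← hRform y]
      exact hy
    · rw [Matrix.mulVec_mulVec, hCX, Matrix.one_mulVec]
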